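/- arXiv:2605.08002 — 3 statements merged into one kernel-verified Lean document; each statement's English description precedes it below -/
import Mathlib

section
/- Let 0 < b < c and q₁, q₂ > 0 be constants satisfying the continuity condition q₁·tanh(q₂(c − b)) = b, and set D = b²/2 + (q₁/q₂)·ln(cosh(q₂(c − b))). Define the hyperbolic tangent function ρ_{b,c} : ℝ → ℝ by ρ_{b,c}(z) = z²/2 for 0 ≤ |z| ≤ b, ρ_{b,c}(z) = D − (q₁/q₂)·ln(cosh(q₂(c − |z|))) for b ≤ |z| ≤ c, and ρ_{b,c}(z) = D for |z| ≥ c. Then ρ_{b,c} is a valid ρ-function: it is continuous and differentiable on ℝ, even, bounded, nondecreasing in |z| (i.e., nondecreasing on [0,∞)), satisfies ρ_{b,c}(0) = 0, and the map z ↦ ρ_{b,c}(√z) is concave on [0, ∞). -/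
/-- The hyperbolic tangent ρ-function `ρ_{b,c}` of Hampel et al. -/
noncomputable def rhoTanh (b c q₁ q₂ : ℝ) (z : ℝ) : ℝ :=
  if |z| ≤ b then z ^ 2 / 2
  else if |z| ≤ c then
    (b ^ 2 / 2 + (q₁ / q₂) * Real.log (Real.cosh (q₂ * (c - b))))
      - (q₁ / q₂) * Real.log (Real.cosh (q₂ * (c - |z|)))
  else b ^ 2 / 2 + (q₁ / q₂) * Real.log (Real.cosh (q₂ * (c - b)))

open Real Set Filter

/-- `rhoTanh` as a function of `|z|` with no absolute value. -/
noncomputable def fTanh (b c q₁ q₂ : ℝ) (t : ℝ) : ℝ :=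
  if t ≤ b then t ^ 2 / 2
  else if t ≤ c then
    (b ^ 2 / 2 + (q₁ / q₂) * Real.log (Real.cosh (q₂ * (c - b))))
      - (q₁ / q₂) * Real.log (Real.cosh (q₂ * (c - t)))
  else b ^ 2 / 2 + (q₁ / q₂) * Real.log (Real.cosh (q₂ * (c - b)))

/-- The derivative of `fTanh`. -/
noncomputable def psiTanh (b c q₁ q₂ : ℝ) (t : ℝ) : ℝ :=
  if t ≤ b then t else if t ≤ c then q₁ * Real.tanh (q₂ * (c - t)) else 0

lemma tanh_le_tanh' {u v : ℝ} (h : u ≤ v) : Real.tanh u ≤ Real.tanh v := by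
  rw [Real.tanh_eq_sinh_div_cosh, Real.tanh_eq_sinh_div_cosh,
    div_le_div_iff₀ (Real.cosh_pos u) (Real.cosh_pos v)]
  have h1 := Real.sinh_sub u v
  have h2 : Real.sinh (u - v) ≤ Real.sinh 0 := Real.sinh_le_sinh.2 (by linarith)
  rw [Real.sinh_zero] at h2
  linarith

lemma tanh_nonneg' {u : ℝ} (h : 0 ≤ u) : 0 ≤ Real.tanh u := by
  have := tanh_le_tanh' h
  rwa [Real.tanh_zero] at this

lemma rhoTanh_eq_fTanh (b c q₁ q₂ z : ℝ) :
    rhoTanh b c q₁ q₂ z = fTanh b c q₁ q₂ |z| := by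
  unfold rhoTanh fTanh
  simp only [sq_abs]

/-- The middle piece. -/
noncomputable def gMid (b c q₁ q₂ : ℝ) (t : ℝ) : ℝ :=
  (b ^ 2 / 2 + (q₁ / q₂) * Real.log (Real.cosh (q₂ * (c - b))))
    - (q₁ / q₂) * Real.log (Real.cosh (q₂ * (c - t)))

lemma hasDerivAt_gMid (b c q₁ : ℝ) {q₂ : ℝ} (hq₂ : 0 < q₂) (t : ℝ) :
    HasDerivAt (gMid b c q₁ q₂) (q₁ * Real.tanh (q₂ * (c - t))) t := by
  have h1 : HasDerivAt (fun t : ℝ => q₂ * (c - t)) (q₂ * (-1)) t :=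
    ((hasDerivAt_id t).const_sub c).const_mul q₂
  have h2 := h1.cosh
  have h3 := h2.log (Real.cosh_pos _).ne'
  have h4 := (h3.const_mul (q₁ / q₂)).const_sub
    (b ^ 2 / 2 + (q₁ / q₂) * Real.log (Real.cosh (q₂ * (c - b))))
  refine HasDerivAt.congr_deriv h4 ?_
  rw [Real.tanh_eq_sinh_div_cosh]
  have hc := (Real.cosh_pos (q₂ * (c - t))).ne'
  field_simp

lemma hasDerivAt_sq2 (t : ℝ) : HasDerivAt (fun t : ℝ => t ^ 2 / 2) t t := by
  have := (hasDerivAt_pow 2 t).div_const 2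
  simpa using this

lemma fTanh_eqOn_left (b c q₁ q₂ : ℝ) :
    EqOn (fTanh b c q₁ q₂) (fun t => t ^ 2 / 2) (Iic b) := by
  intro t ht
  simp only [fTanh, if_pos (mem_Iic.1 ht)]

lemma fTanh_eqOn_mid (b c q₁ q₂ : ℝ) :
    EqOn (fTanh b c q₁ q₂) (gMid b c q₁ q₂) (Icc b c) := by
  intro t ht
  rcases eq_or_lt_of_le ht.1 with h | h
  · simp only [fTanh, ← h, le_refl, if_pos, gMid]
    ring
  · simp only [fTanh, gMid, if_neg (not_le.2 h), if_pos ht.2]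

lemma fTanh_eqOn_right {b c : ℝ} (q₁ q₂ : ℝ) (hbc : b < c) :
    EqOn (fTanh b c q₁ q₂)
      (fun _ => b ^ 2 / 2 + (q₁ / q₂) * Real.log (Real.cosh (q₂ * (c - b)))) (Ici c) := by
  intro t ht
  rcases eq_or_lt_of_le (mem_Ici.1 ht) with h | h
  · subst h
    simp only [fTanh, if_neg (not_le.2 hbc), le_refl, if_pos, sub_self, mul_zero,
      Real.cosh_zero, Real.log_one, sub_zero]
  · have htb : ¬ t ≤ b := not_le.2 (lt_trans hbc h)
    simp only [fTanh, if_neg htb, if_neg (not_le.2 h)]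

lemma hasDerivAt_fTanh {b c q₁ q₂ : ℝ} (hbc : b < c) (hq₂ : 0 < q₂)
    (hcont : q₁ * Real.tanh (q₂ * (c - b)) = b) (t : ℝ) :
    HasDerivAt (fTanh b c q₁ q₂) (psiTanh b c q₁ q₂ t) t := by
  rcases lt_trichotomy t b with h | h | h
  · have heq : fTanh b c q₁ q₂ =ᶠ[nhds t] fun t => t ^ 2 / 2 :=
      eventually_of_mem (Iio_mem_nhds h) fun x hx =>
        fTanh_eqOn_left b c q₁ q₂ (mem_Iic.2 (le_of_lt (mem_Iio.1 hx)))
    have hpsi : psiTanh b c q₁ q₂ t = t := if_pos h.le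
    rw [hpsi]
    exact (hasDerivAt_sq2 t).congr_of_eventuallyEq heq
  · rw [h]
    have hleft : HasDerivWithinAt (fTanh b c q₁ q₂) b (Iic b) b :=
      (hasDerivAt_sq2 b).hasDerivWithinAt.congr (fun x hx => fTanh_eqOn_left b c q₁ q₂ hx)
        (fTanh_eqOn_left b c q₁ q₂ (mem_Iic.2 (le_refl b)))
    have hright : HasDerivWithinAt (fTanh b c q₁ q₂) b (Icc b c) b := by
      have h2 := (hasDerivAt_gMid b c q₁ hq₂ b).hasDerivWithinAt (s := Icc b c)
      rw [hcont] at h2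
      exact h2.congr (fun x hx => fTanh_eqOn_mid b c q₁ q₂ hx)
        (fTanh_eqOn_mid b c q₁ q₂ ⟨le_refl b, hbc.le⟩)
    have hu := hleft.union hright
    rw [Iic_union_Icc_eq_Iic hbc.le] at hu
    have hpsi : psiTanh b c q₁ q₂ b = b := if_pos (le_refl b)
    rw [hpsi]
    exact hu.hasDerivAt (Iic_mem_nhds hbc)
  · rcases lt_trichotomy t c with h2 | h2 | h2
    · have heq : fTanh b c q₁ q₂ =ᶠ[nhds t] gMid b c q₁ q₂ :=
        eventually_of_mem (Ioo_mem_nhds h h2) fun x hx =>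
          fTanh_eqOn_mid b c q₁ q₂ ⟨hx.1.le, hx.2.le⟩
      have hpsi : psiTanh b c q₁ q₂ t = q₁ * Real.tanh (q₂ * (c - t)) := by
        rw [psiTanh, if_neg (not_le.2 h), if_pos h2.le]
      rw [hpsi]
      exact (hasDerivAt_gMid b c q₁ hq₂ t).congr_of_eventuallyEq heq
    · rw [h2]
      have hleft : HasDerivWithinAt (fTanh b c q₁ q₂) 0 (Icc b c) c := by
        have h3 := (hasDerivAt_gMid b c q₁ hq₂ c).hasDerivWithinAt (s := Icc b c)
        rw [sub_self, mul_zero, Real.tanh_zero, mul_zero] at h3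
        exact h3.congr (fun x hx => fTanh_eqOn_mid b c q₁ q₂ hx)
          (fTanh_eqOn_mid b c q₁ q₂ ⟨hbc.le, le_refl c⟩)
      have hright : HasDerivWithinAt (fTanh b c q₁ q₂) 0 (Ici c) c :=
        (hasDerivAt_const c _).hasDerivWithinAt.congr
          (fun x hx => fTanh_eqOn_right q₁ q₂ hbc hx)
          (fTanh_eqOn_right q₁ q₂ hbc (mem_Ici.2 (le_refl c)))
      have hu := hleft.union hright
      rw [Icc_union_Ici_eq_Ici hbc.le] at hu
      have hpsi : psiTanh b c q₁ q₂ c = 0 := by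
        rw [psiTanh, if_neg (not_le.2 hbc), if_pos (le_refl c), sub_self, mul_zero,
          Real.tanh_zero, mul_zero]
      rw [hpsi]
      exact hu.hasDerivAt (Ici_mem_nhds hbc)
    · have heq : fTanh b c q₁ q₂ =ᶠ[nhds t]
          fun _ => b ^ 2 / 2 + (q₁ / q₂) * Real.log (Real.cosh (q₂ * (c - b))) :=
        eventually_of_mem (Ioi_mem_nhds h2) fun x hx =>
          fTanh_eqOn_right q₁ q₂ hbc (mem_Ici.2 (le_of_lt (mem_Ioi.1 hx)))
      have hpsi : psiTanh b c q₁ q₂ t = 0 := by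
        rw [psiTanh, if_neg (not_le.2 h), if_neg (not_le.2 h2)]
      rw [hpsi]
      exact (hasDerivAt_const t _).congr_of_eventuallyEq heq

lemma psiTanh_nonneg {b c q₁ q₂ : ℝ} (hq₁ : 0 < q₁) (hq₂ : 0 < q₂) {t : ℝ} (ht : 0 ≤ t) :
    0 ≤ psiTanh b c q₁ q₂ t := by
  unfold psiTanh
  split_ifs with h1 h2
  · exact ht
  · exact mul_nonneg hq₁.le (tanh_nonneg' (mul_nonneg hq₂.le (sub_nonneg.2 h2)))
  · exact le_refl 0

lemma psiTanh_slope {b c q₁ q₂ : ℝ} (hb : 0 < b) (hbc : b < c) (hq₁ : 0 < q₁) (hq₂ : 0 < q₂)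
    (hcont : q₁ * Real.tanh (q₂ * (c - b)) = b) {s t : ℝ} (hs : 0 < s) (hst : s ≤ t) :
    psiTanh b c q₁ q₂ t * s ≤ psiTanh b c q₁ q₂ s * t := by
  have ht : 0 < t := lt_of_lt_of_le hs hst
  rcases le_or_gt t b with h1 | h1
  · rw [psiTanh, psiTanh, if_pos h1, if_pos (hst.trans h1), mul_comm]
  · rcases le_or_gt t c with h2 | h2
    · have htanh : Real.tanh (q₂ * (c - t)) ≤ Real.tanh (q₂ * (c - s)) :=
        tanh_le_tanh' (by nlinarith)
      have htanh0 : 0 ≤ Real.tanh (q₂ * (c - t)) :=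
        tanh_nonneg' (mul_nonneg hq₂.le (by linarith))
      rcases le_or_gt s b with h3 | h3
      · rw [psiTanh, psiTanh, if_pos h3, if_neg (not_le.2 h1), if_pos h2]
        have hbd : q₁ * Real.tanh (q₂ * (c - t)) ≤ b := by
          rw [← hcont]
          exact mul_le_mul_of_nonneg_left (tanh_le_tanh' (by nlinarith)) hq₁.le
        nlinarith
      · rw [psiTanh, psiTanh, if_neg (not_le.2 h1), if_pos h2,
          if_neg (not_le.2 h3), if_pos (hst.trans h2)]
        calc q₁ * Real.tanh (q₂ * (c - t)) * s
            ≤ q₁ * Real.tanh (q₂ * (c - s)) * s :=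
              mul_le_mul_of_nonneg_right (mul_le_mul_of_nonneg_left htanh hq₁.le) hs.le
          _ ≤ q₁ * Real.tanh (q₂ * (c - s)) * t :=
              mul_le_mul_of_nonneg_left hst
                (mul_nonneg hq₁.le (htanh0.trans htanh))
    · rw [psiTanh, if_neg (not_le.2 h1), if_neg (not_le.2 h2), zero_mul]
      exact mul_nonneg (psiTanh_nonneg hq₁ hq₂ hs.le) ht.le

/-- The hyperbolic tangent function `ρ_{b,c}` is a valid ρ-function: it is continuous,
differentiable, even, bounded, nondecreasing on `[0,∞)`, vanishes at `0`, and
`z ↦ ρ_{b,c}(√z)` is concave on `[0,∞)`. -/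
theorem rhoTanh_isValidRhoFunction (b c q₁ q₂ : ℝ) (hb : 0 < b) (hbc : b < c)
    (hq₁ : 0 < q₁) (hq₂ : 0 < q₂)
    (hcont : q₁ * Real.tanh (q₂ * (c - b)) = b) :
    Continuous (rhoTanh b c q₁ q₂) ∧
    Differentiable ℝ (rhoTanh b c q₁ q₂) ∧
    (∀ z : ℝ, rhoTanh b c q₁ q₂ (-z) = rhoTanh b c q₁ q₂ z) ∧
    (∃ K : ℝ, ∀ z : ℝ, |rhoTanh b c q₁ q₂ z| ≤ K) ∧
    MonotoneOn (rhoTanh b c q₁ q₂) (Set.Ici (0 : ℝ)) ∧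
    rhoTanh b c q₁ q₂ 0 = 0 ∧
    ConcaveOn ℝ (Set.Ici (0 : ℝ)) (fun z => rhoTanh b c q₁ q₂ (Real.sqrt z)) := by
  have hdiff : Differentiable ℝ (fTanh b c q₁ q₂) :=
    fun t => (hasDerivAt_fTanh hbc hq₂ hcont t).differentiableAt
  have hfabs : rhoTanh b c q₁ q₂ = fun z => fTanh b c q₁ q₂ |z| :=
    funext fun z => rhoTanh_eq_fTanh b c q₁ q₂ z
  have hlogpos : 0 ≤ (q₁ / q₂) * Real.log (Real.cosh (q₂ * (c - b))) :=
    mul_nonneg (div_nonneg hq₁.le hq₂.le) (Real.log_nonneg (Real.one_le_cosh _))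
  have hb2 : 0 ≤ b ^ 2 / 2 := by positivity
  refine ⟨?_, ?_, ?_, ?_, ?_, ?_, ?_⟩
  · -- Continuity
    rw [hfabs]
    exact hdiff.continuous.comp continuous_abs
  · -- Differentiability
    intro z
    rcases lt_trichotomy z 0 with h | h | h
    · have heq : rhoTanh b c q₁ q₂ =ᶠ[nhds z] fun x => fTanh b c q₁ q₂ (-x) :=
        eventually_of_mem (Iio_mem_nhds h) fun x hx => by
          rw [rhoTanh_eq_fTanh, abs_of_neg hx]
      exact (DifferentiableAt.comp z (hdiff _) (differentiable_neg z)).congr_of_eventuallyEq heq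
    · subst h
      have heq : rhoTanh b c q₁ q₂ =ᶠ[nhds (0 : ℝ)] fun x => x ^ 2 / 2 :=
        eventually_of_mem (Ioo_mem_nhds (by linarith : -b < (0:ℝ)) hb) fun x hx => by
          have hx' : |x| ≤ b := le_of_lt (abs_lt.2 ⟨hx.1, hx.2⟩)
          simp [rhoTanh, hx']
      exact ((differentiable_pow 2 |>.div_const 2) 0).congr_of_eventuallyEq heq
    · have heq : rhoTanh b c q₁ q₂ =ᶠ[nhds z] fTanh b c q₁ q₂ :=
        eventually_of_mem (Ioi_mem_nhds h) fun x hx => by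
          rw [rhoTanh_eq_fTanh, abs_of_pos hx]
      exact (hdiff z).congr_of_eventuallyEq heq
  · -- Even
    intro z
    unfold rhoTanh
    rw [abs_neg, neg_pow]
    norm_num
  · -- Bounded
    refine ⟨b ^ 2 / 2 + (q₁ / q₂) * Real.log (Real.cosh (q₂ * (c - b))), fun z => ?_⟩
    have hbounds : 0 ≤ rhoTanh b c q₁ q₂ z ∧ rhoTanh b c q₁ q₂ z ≤
        b ^ 2 / 2 + (q₁ / q₂) * Real.log (Real.cosh (q₂ * (c - b))) := by
      unfold rhoTanh
      split_ifs with h1 h2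
      · refine ⟨by positivity, ?_⟩
        have hz2 : z ^ 2 ≤ b ^ 2 := by
          rw [← sq_abs]
          exact pow_le_pow_left₀ (abs_nonneg z) h1 2
        linarith
      · push_neg at h1
        have hzc : 0 ≤ c - |z| := by linarith
        have hlog2 : 0 ≤ Real.log (Real.cosh (q₂ * (c - |z|))) :=
          Real.log_nonneg (Real.one_le_cosh _)
        have hlog3 : Real.log (Real.cosh (q₂ * (c - |z|))) ≤
            Real.log (Real.cosh (q₂ * (c - b))) := by
          apply Real.log_le_log (Real.cosh_pos _)
          rw [Real.cosh_le_cosh]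
          have hc1 : 0 ≤ q₂ * (c - |z|) := mul_nonneg hq₂.le hzc
          have hc2 : 0 ≤ q₂ * (c - b) := mul_nonneg hq₂.le (by linarith)
          rw [abs_of_nonneg hc1, abs_of_nonneg hc2]
          nlinarith
        have hmul : (q₁ / q₂) * Real.log (Real.cosh (q₂ * (c - |z|))) ≤
            (q₁ / q₂) * Real.log (Real.cosh (q₂ * (c - b))) :=
          mul_le_mul_of_nonneg_left hlog3 (div_nonneg hq₁.le hq₂.le)
        have hmul0 : 0 ≤ (q₁ / q₂) * Real.log (Real.cosh (q₂ * (c - |z|))) :=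
          mul_nonneg (div_nonneg hq₁.le hq₂.le) hlog2
        exact ⟨by linarith, by linarith⟩
      · exact ⟨by linarith, le_refl _⟩
    rw [abs_le]
    exact ⟨by linarith [hbounds.1, hbounds.2], hbounds.2⟩
  · -- Monotone on [0, ∞)
    have hmono : MonotoneOn (fTanh b c q₁ q₂) (Ici (0 : ℝ)) := by
      apply monotoneOn_of_deriv_nonneg (convex_Ici 0) hdiff.continuous.continuousOn
        hdiff.differentiableOn
      intro x hx
      rw [interior_Ici] at hx
      rw [(hasDerivAt_fTanh hbc hq₂ hcont x).deriv]
      exact psiTanh_nonneg hq₁ hq₂ (le_of_lt hx)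
    intro x hx y hy hxy
    rw [rhoTanh_eq_fTanh, rhoTanh_eq_fTanh, abs_of_nonneg hx, abs_of_nonneg hy]
    exact hmono hx hy hxy
  · -- value at 0
    simp [rhoTanh, hb.le]
  · -- Concavity of z ↦ ρ(√z)
    have hgeq : (fun z => rhoTanh b c q₁ q₂ (Real.sqrt z)) =
        fun z => fTanh b c q₁ q₂ (Real.sqrt z) := by
      funext z
      rw [rhoTanh_eq_fTanh, abs_of_nonneg (Real.sqrt_nonneg z)]
    rw [hgeq]
    have hderiv : ∀ x ∈ Ioi (0 : ℝ),
        HasDerivAt (fun z => fTanh b c q₁ q₂ (Real.sqrt z))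
          (psiTanh b c q₁ q₂ (Real.sqrt x) * (1 / (2 * Real.sqrt x))) x := by
      intro x hx
      exact (hasDerivAt_fTanh hbc hq₂ hcont (Real.sqrt x)).comp x
        (Real.hasDerivAt_sqrt (ne_of_gt hx))
    refine AntitoneOn.concaveOn_of_deriv (convex_Ici 0) ?_ ?_ ?_
    · exact (hdiff.continuous.comp Real.continuous_sqrt).continuousOn
    · rw [interior_Ici]
      exact fun x hx => (hderiv x hx).differentiableAt.differentiableWithinAt
    · rw [interior_Ici]
      intro x hx y hy hxy
      rw [(hderiv x hx).deriv, (hderiv y hy).deriv]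
      have hsx : 0 < Real.sqrt x := Real.sqrt_pos.2 hx
      have hsy : 0 < Real.sqrt y := Real.sqrt_pos.2 hy
      have hst : Real.sqrt x ≤ Real.sqrt y := Real.sqrt_le_sqrt hxy
      have key := psiTanh_slope hb hbc hq₁ hq₂ hcont hsx hst
      rw [mul_one_div, mul_one_div, div_le_div_iff₀ (by positivity) (by positivity)]
      nlinarith
end

section
/- Let (a, L) ∈ ℝ^d × Sym_d(ℝ), and let L = Q Λ Qᵀ be a spectral decomposition of L, where Q is a d×d orthogonal matrix and Λ = diag(λ₁,…,λ_d) contains the eigenvalues of L. Define ã = a if ‖a‖ ≤ M and ã = (M/‖a‖)·a otherwise, and define L̃ = Q Λ_c Qᵀ where Λ_c = diag(λ̃₁,…,λ̃_d) with λ̃_j = min{max{λ_j, c}, C}. Then (ã, L̃) belongs to Θ and is the metric projection of (a, L) onto Θ: it is the unique minimizer over (μ,Σ) ∈ Θ of ‖μ − a‖² + ‖Σ − L‖_F². -/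
open Matrix

-- scalar clipping lemma
lemma clip_best {c C lam s : ℝ} (hcC : c ≤ C) (h1 : c ≤ s) (h2 : s ≤ C) :
    (min (max lam c) C - lam) ^ 2 ≤ (s - lam) ^ 2 ∧
      ((s - lam) ^ 2 = (min (max lam c) C - lam) ^ 2 → s = min (max lam c) C) := by
  rcases le_total lam c with h | h
  · rw [max_eq_right h, min_eq_left hcC]
    constructor
    · nlinarith
    · intro he; nlinarith
  · rcases le_total C lam with h' | h'
    · rw [max_eq_left (le_trans hcC h'), min_eq_right h']
      constructor
      · nlinarith
      · intro he; nlinarith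
    · rw [max_eq_left h, min_eq_left h']
      constructor
      · nlinarith
      · intro he; nlinarith

-- Frobenius = trace
lemma fro_eq_trace {d : ℕ} (A : Matrix (Fin d) (Fin d) ℝ) :
    ∑ i, ∑ j, (A i j) ^ 2 = (Aᵀ * A).trace := by
  rw [Matrix.trace]
  simp only [Matrix.diag, Matrix.mul_apply, Matrix.transpose_apply]
  rw [Finset.sum_comm]
  simp [sq]

lemma fro_conj {d : ℕ} (Q B : Matrix (Fin d) (Fin d) ℝ) (hQ : Q * Qᵀ = 1) :
    ∑ i, ∑ j, ((Q * B * Qᵀ) i j) ^ 2 = ∑ i, ∑ j, (B i j) ^ 2 := by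
  have hQ' : Qᵀ * Q = 1 := mul_eq_one_comm.mp hQ
  rw [fro_eq_trace, fro_eq_trace]
  have key : (Q * B * Qᵀ)ᵀ * (Q * B * Qᵀ) = Q * ((Bᵀ * B) * Qᵀ) := by
    simp only [Matrix.transpose_mul, Matrix.transpose_transpose, Matrix.mul_assoc]
    rw [← Matrix.mul_assoc Qᵀ Q, hQ', Matrix.one_mul]
  rw [key, Matrix.trace_mul_comm, Matrix.mul_assoc, hQ', Matrix.mul_one]

lemma psd_diag {d : ℕ} {N : Matrix (Fin d) (Fin d) ℝ} (hN : N.PosSemidef) (i : Fin d) :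
    0 ≤ N i i := by
  exact hN.diag_nonneg

lemma ball_proj {d : ℕ} {M : ℝ} (hM : 0 < M) (a μ atil : EuclideanSpace ℝ (Fin d))
    (hμ : ‖μ‖ ≤ M) (hatil : atil = if ‖a‖ ≤ M then a else (M / ‖a‖) • a) :
    ‖atil - a‖ ≤ ‖μ - a‖ ∧ (‖μ - a‖ = ‖atil - a‖ → μ = atil) := by
  by_cases h : ‖a‖ ≤ M
  · rw [hatil, if_pos h]
    refine ⟨by simp, fun he => ?_⟩
    have : ‖μ - a‖ = 0 := by simpa using he
    exact sub_eq_zero.mp (norm_eq_zero.mp this)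
  · rw [hatil, if_neg h]
    push_neg at h
    have ha0 : (0:ℝ) < ‖a‖ := lt_trans hM h
    have hnorm : ‖(M / ‖a‖) • a - a‖ = ‖a‖ - M := by
      have : (M / ‖a‖) • a - a = (M / ‖a‖ - 1) • a := by
        rw [sub_smul, one_smul]
      rw [this, norm_smul]
      rw [Real.norm_eq_abs, abs_of_nonpos (by
        have : M / ‖a‖ ≤ 1 := (div_le_one ha0).mpr h.le
        linarith)]
      field_simp
      ring
    rw [hnorm]
    have hlow : ‖a‖ - M ≤ ‖μ - a‖ := by
      have h1 : ‖a‖ - ‖μ‖ ≤ ‖a - μ‖ := norm_sub_norm_le a μ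
      rw [norm_sub_rev] at h1
      linarith
    refine ⟨hlow, fun he => ?_⟩
    -- equality case
    have hsq : ‖μ - a‖ ^ 2 = ‖μ‖ ^ 2 - 2 * inner ℝ μ a + ‖a‖ ^ 2 := by
      rw [@norm_sub_sq_real]
    have hcs : (inner ℝ μ a : ℝ) ≤ ‖μ‖ * ‖a‖ := real_inner_le_norm μ a
    have hμn : 0 ≤ ‖μ‖ := norm_nonneg μ
    have heq2 : ‖μ - a‖ ^ 2 = (‖a‖ - M) ^ 2 := by rw [he]
    have hnm : ‖μ‖ = M := by nlinarith
    have hin : (inner ℝ μ a : ℝ) = ‖μ‖ * ‖a‖ := by nlinarith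
    have hpar : ‖a‖ • μ = ‖μ‖ • a := inner_eq_norm_mul_iff_real.mp hin
    have := congrArg (fun v : EuclideanSpace ℝ (Fin d) => (‖a‖)⁻¹ • v) hpar
    simp only [smul_smul, inv_mul_cancel₀ ha0.ne', one_smul] at this
    rw [this, hnm, div_eq_inv_mul]

lemma mat_proj {d : ℕ} {c C : ℝ} (hcC : c ≤ C) (Q : Matrix (Fin d) (Fin d) ℝ)
    (lam : Fin d → ℝ) (hQ : Q * Qᵀ = 1) (A : Matrix (Fin d) (Fin d) ℝ)
    (h1 : (A - c • (1 : Matrix (Fin d) (Fin d) ℝ)).PosSemidef)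
    (h2 : ((C • (1 : Matrix (Fin d) (Fin d) ℝ)) - A).PosSemidef) :
    (∑ i, ∑ j, ((Q * Matrix.diagonal (fun j => min (max (lam j) c) C) * Qᵀ) i j
        - (Q * Matrix.diagonal lam * Qᵀ) i j) ^ 2
      ≤ ∑ i, ∑ j, (A i j - (Q * Matrix.diagonal lam * Qᵀ) i j) ^ 2) ∧
    ((∑ i, ∑ j, (A i j - (Q * Matrix.diagonal lam * Qᵀ) i j) ^ 2
      = ∑ i, ∑ j, ((Q * Matrix.diagonal (fun j => min (max (lam j) c) C) * Qᵀ) i j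
        - (Q * Matrix.diagonal lam * Qᵀ) i j) ^ 2) →
      A = Q * Matrix.diagonal (fun j => min (max (lam j) c) C) * Qᵀ) := by
  have hQ' : Qᵀ * Q = 1 := mul_eq_one_comm.mp hQ
  set D := Matrix.diagonal lam with hD
  set Dc := Matrix.diagonal (fun j => min (max (lam j) c) C) with hDc
  set S := Qᵀ * A * Q with hS
  have hA : A = Q * S * Qᵀ := by
    rw [hS]
    simp only [← Matrix.mul_assoc]
    rw [hQ, Matrix.one_mul, Matrix.mul_assoc, hQ, Matrix.mul_one]
  -- the two Frobenius identities
  have froA : ∑ i, ∑ j, (A i j - (Q * D * Qᵀ) i j) ^ 2 = ∑ i, ∑ j, ((S - D) i j) ^ 2 := by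
    have e : A - Q * D * Qᵀ = Q * (S - D) * Qᵀ := by
      rw [Matrix.mul_sub, Matrix.sub_mul, ← hA]
    calc ∑ i, ∑ j, (A i j - (Q * D * Qᵀ) i j) ^ 2
        = ∑ i, ∑ j, ((Q * (S - D) * Qᵀ) i j) ^ 2 := by
          simp only [← e, Matrix.sub_apply]
      _ = ∑ i, ∑ j, ((S - D) i j) ^ 2 := fro_conj Q _ hQ
  have froL : ∑ i, ∑ j, ((Q * Dc * Qᵀ) i j - (Q * D * Qᵀ) i j) ^ 2
      = ∑ i, ∑ j, ((Dc - D) i j) ^ 2 := by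
    have e : Q * Dc * Qᵀ - Q * D * Qᵀ = Q * (Dc - D) * Qᵀ := by
      rw [Matrix.mul_sub, Matrix.sub_mul]
    calc ∑ i, ∑ j, ((Q * Dc * Qᵀ) i j - (Q * D * Qᵀ) i j) ^ 2
        = ∑ i, ∑ j, ((Q * (Dc - D) * Qᵀ) i j) ^ 2 := by
          simp only [← e, Matrix.sub_apply]
      _ = ∑ i, ∑ j, ((Dc - D) i j) ^ 2 := fro_conj Q _ hQ
  -- diagonal bounds on S
  have hpsd1 : (S - c • (1 : Matrix (Fin d) (Fin d) ℝ)).PosSemidef := by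
    have e1 : Qᵀ * (A - c • (1 : Matrix (Fin d) (Fin d) ℝ)) * Q
        = S - c • (1 : Matrix (Fin d) (Fin d) ℝ) := by
      rw [Matrix.mul_sub, Matrix.sub_mul, Matrix.mul_smul, Matrix.mul_one,
        Matrix.smul_mul, hQ', hS]
    have := h1.conjTranspose_mul_mul_same Q
    rwa [Matrix.conjTranspose_eq_transpose_of_trivial, e1] at this
  have hpsd2 : ((C • (1 : Matrix (Fin d) (Fin d) ℝ)) - S).PosSemidef := by
    have e2 : Qᵀ * ((C • (1 : Matrix (Fin d) (Fin d) ℝ)) - A) * Q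
        = (C • (1 : Matrix (Fin d) (Fin d) ℝ)) - S := by
      rw [Matrix.mul_sub, Matrix.sub_mul, Matrix.mul_smul, Matrix.mul_one,
        Matrix.smul_mul, hQ', hS]
    have := h2.conjTranspose_mul_mul_same Q
    rwa [Matrix.conjTranspose_eq_transpose_of_trivial, e2] at this
  have hlo : ∀ i, c ≤ S i i := fun i => by
    have := psd_diag hpsd1 i
    simp only [Matrix.sub_apply, Matrix.smul_apply, Matrix.one_apply_eq, smul_eq_mul,
      mul_one] at this
    linarith
  have hhi : ∀ i, S i i ≤ C := fun i => by
    have := psd_diag hpsd2 i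
    simp only [Matrix.sub_apply, Matrix.smul_apply, Matrix.one_apply_eq, smul_eq_mul,
      mul_one] at this
    linarith
  -- pointwise inequality
  have hpt : ∀ i j, ((Dc - D) i j) ^ 2 ≤ ((S - D) i j) ^ 2 := by
    intro i j
    by_cases hij : i = j
    · subst hij
      simp only [Matrix.sub_apply, hDc, hD, Matrix.diagonal_apply_eq]
      exact (clip_best hcC (hlo i) (hhi i)).1
    · simp only [Matrix.sub_apply, hDc, hD, Matrix.diagonal_apply_ne _ hij, sub_zero]
      simpa using sq_nonneg (S i j)
  have hinner : ∀ i, ∑ j, ((Dc - D) i j) ^ 2 ≤ ∑ j, ((S - D) i j) ^ 2 := fun i =>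
    Finset.sum_le_sum fun j _ => hpt i j
  constructor
  · rw [froA, froL]
    exact Finset.sum_le_sum fun i _ => hinner i
  · intro heq
    rw [froA, froL] at heq
    have houter := (Finset.sum_eq_sum_iff_of_le fun i _ => hinner i).mp heq.symm
    have hall : ∀ i j, ((Dc - D) i j) ^ 2 = ((S - D) i j) ^ 2 := by
      intro i j
      exact (Finset.sum_eq_sum_iff_of_le fun j _ => hpt i j).mp
        (houter i (Finset.mem_univ i)) j (Finset.mem_univ j)
    have hSDc : S = Dc := by
      ext i j
      by_cases hij : i = j
      · subst hij
        have := hall i i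
        simp only [Matrix.sub_apply, hDc, hD, Matrix.diagonal_apply_eq] at this ⊢
        exact (clip_best hcC (hlo i) (hhi i)).2 this.symm
      · have := hall i j
        simp only [Matrix.sub_apply, hDc, hD, Matrix.diagonal_apply_ne _ hij,
          sub_zero] at this ⊢
        have : (S i j) ^ 2 = 0 := by linarith [this]
        exact pow_eq_zero_iff (by norm_num) |>.mp this
    rw [hA, hSDc]

/-- The parameter set `Θ = {(μ,Σ) : ‖μ‖ ≤ M, Σ symmetric, eigenvalues of Σ in [c,C]}`,
where the eigenvalue condition is expressed as `Σ - c·I ⪰ 0` and `C·I - Σ ⪰ 0`. -/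
def Theta (d : ℕ) (M c C : ℝ) :
    Set (EuclideanSpace ℝ (Fin d) × Matrix (Fin d) (Fin d) ℝ) :=
  {p | ‖p.1‖ ≤ M ∧ p.2.IsSymm ∧
    (p.2 - c • (1 : Matrix (Fin d) (Fin d) ℝ)).PosSemidef ∧
    ((C • (1 : Matrix (Fin d) (Fin d) ℝ)) - p.2).PosSemidef}

/-- The explicit formula `(ã, L̃)` — clipping `a` to the ball of radius `M` and clipping the
eigenvalues of `L = Q Λ Qᵀ` to `[c,C]` — gives the metric projection of `(a,L)` onto `Θ`:
it lies in `Θ` and is the unique minimizer of `‖μ − a‖² + ‖Σ − L‖_F²` over `Θ`. -/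
theorem theta_projection_formula (d : ℕ) (hd : 0 < d) (M c C : ℝ)
    (hM : 0 < M) (hc : 0 < c) (hcC : c ≤ C)
    (a : EuclideanSpace ℝ (Fin d)) (L : Matrix (Fin d) (Fin d) ℝ) (hL : L.IsSymm)
    (Q : Matrix (Fin d) (Fin d) ℝ) (lam : Fin d → ℝ)
    (hQ : Q * Qᵀ = 1) (hdecomp : L = Q * Matrix.diagonal lam * Qᵀ)
    (atil : EuclideanSpace ℝ (Fin d))
    (hatil : atil = if ‖a‖ ≤ M then a else (M / ‖a‖) • a)
    (Ltil : Matrix (Fin d) (Fin d) ℝ)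
    (hLtil : Ltil = Q * Matrix.diagonal (fun j => min (max (lam j) c) C) * Qᵀ) :
    (atil, Ltil) ∈ Theta d M c C ∧
    (∀ p ∈ Theta d M c C,
      ‖atil - a‖ ^ 2 + ∑ i, ∑ j, (Ltil i j - L i j) ^ 2
        ≤ ‖p.1 - a‖ ^ 2 + ∑ i, ∑ j, (p.2 i j - L i j) ^ 2) ∧
    (∀ p ∈ Theta d M c C,
      ‖p.1 - a‖ ^ 2 + ∑ i, ∑ j, (p.2 i j - L i j) ^ 2
        = ‖atil - a‖ ^ 2 + ∑ i, ∑ j, (Ltil i j - L i j) ^ 2 →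
      p = (atil, Ltil)) := by
  have hmem : (atil, Ltil) ∈ Theta d M c C := by
    refine ⟨?_, ?_, ?_, ?_⟩
    · by_cases h : ‖a‖ ≤ M
      · rw [hatil, if_pos h]; exact h
      · rw [hatil, if_neg h]
        push_neg at h
        have ha0 : (0:ℝ) < ‖a‖ := lt_trans hM h
        rw [norm_smul, Real.norm_eq_abs, abs_of_nonneg (by positivity)]
        rw [div_mul_cancel₀ _ ha0.ne']
    · rw [hLtil, Matrix.IsSymm]
      simp [Matrix.transpose_mul, Matrix.diagonal_transpose, Matrix.mul_assoc]
    · have e : Ltil - c • (1 : Matrix (Fin d) (Fin d) ℝ)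
          = Q * (Matrix.diagonal (fun j => min (max (lam j) c) C)
              - c • (1 : Matrix (Fin d) (Fin d) ℝ)) * Qᵀ := by
        rw [hLtil, Matrix.mul_sub, Matrix.sub_mul, Matrix.mul_smul, Matrix.mul_one,
          Matrix.smul_mul, hQ]
      rw [e]
      have hpsd : (Matrix.diagonal (fun j => min (max (lam j) c) C)
          - c • (1 : Matrix (Fin d) (Fin d) ℝ)).PosSemidef := by
        rw [Matrix.smul_one_eq_diagonal, Matrix.diagonal_sub]
        refine Matrix.posSemidef_diagonal_iff.mpr fun i => ?_
        have : c ≤ min (max (lam i) c) C := le_min (le_max_right _ _) hcC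
        simpa using this
      have := hpsd.mul_mul_conjTranspose_same Q
      rwa [Matrix.conjTranspose_eq_transpose_of_trivial] at this
    · have e : (C • (1 : Matrix (Fin d) (Fin d) ℝ)) - Ltil
          = Q * ((C • (1 : Matrix (Fin d) (Fin d) ℝ))
              - Matrix.diagonal (fun j => min (max (lam j) c) C)) * Qᵀ := by
        rw [hLtil, Matrix.mul_sub, Matrix.sub_mul, Matrix.mul_smul, Matrix.mul_one,
          Matrix.smul_mul, hQ]
      rw [e]
      have hpsd : ((C • (1 : Matrix (Fin d) (Fin d) ℝ))
          - Matrix.diagonal (fun j => min (max (lam j) c) C)).PosSemidef := by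
        rw [Matrix.smul_one_eq_diagonal, Matrix.diagonal_sub]
        refine Matrix.posSemidef_diagonal_iff.mpr fun i => ?_
        have : min (max (lam i) c) C ≤ C := min_le_right _ _
        simpa using this
      have := hpsd.mul_mul_conjTranspose_same Q
      rwa [Matrix.conjTranspose_eq_transpose_of_trivial] at this
  refine ⟨hmem, ?_, ?_⟩
  · rintro ⟨μ, A⟩ ⟨hpμ, hpsym, hp1, hp2⟩
    have hv := (ball_proj hM a μ atil hpμ hatil).1
    have hm := (mat_proj hcC Q lam hQ A hp1 hp2).1
    rw [← hdecomp, ← hLtil] at hm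
    have hv2 : ‖atil - a‖ ^ 2 ≤ ‖μ - a‖ ^ 2 :=
      pow_le_pow_left₀ (norm_nonneg _) hv 2
    exact add_le_add hv2 hm
  · rintro ⟨μ, A⟩ ⟨hpμ, hpsym, hp1, hp2⟩ heq
    have hv := (ball_proj hM a μ atil hpμ hatil).1
    have hmfull := mat_proj hcC Q lam hQ A hp1 hp2
    rw [← hdecomp, ← hLtil] at hmfull
    have hv2 : ‖atil - a‖ ^ 2 ≤ ‖μ - a‖ ^ 2 :=
      pow_le_pow_left₀ (norm_nonneg _) hv 2
    simp only at heq
    have hveq : ‖μ - a‖ ^ 2 = ‖atil - a‖ ^ 2 := by linarith [hmfull.1]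
    have hmeq : ∑ i, ∑ j, (A i j - L i j) ^ 2
        = ∑ i, ∑ j, (Ltil i j - L i j) ^ 2 := by linarith [hmfull.1]
    have h1 : μ = atil :=
      (ball_proj hM a μ atil hpμ hatil).2
        ((sq_eq_sq₀ (norm_nonneg _) (norm_nonneg _)).mp hveq)
    have h2 : A = Ltil := hmfull.2 hmeq
    simp [h1, h2]
end

section
/- Let (Ω, F, P) be a probability space, let Θ be a compact subset of ℝ^m containing a point θ₀, and let π : Θ → ℝ^k be continuous and satisfy the separation (identification) condition: for every ε > 0, inf{‖π(θ) − π(θ₀)‖ : θ ∈ Θ, ‖θ − θ₀‖ ≥ ε} > 0. For each n, let π̂_n : Ω → ℝ^k be a random vector, let π̄_n : Ω × Θ → ℝ^k be such that ω ↦ sup_{θ∈Θ} ‖π̄_n(ω,θ) − π(θ)‖ is a random variable, and let θ̂_n : Ω → Θ be a random vector. Assume that, as n → ∞: (i) sup_{θ∈Θ} ‖π̄_n(·,θ) − π(θ)‖ → 0 in probability; (ii) ‖π̂_n − π(θ₀)‖ → 0 in probability; and (iii) ‖π̂_n − π̄_n(·, θ̂_n)‖ → 0 in probability. Then θ̂_n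 is consistent for θ₀, i.e., ‖θ̂_n − θ₀‖ → 0 in probability. -/
open MeasureTheory Filter

/-- Consistency of the indirect inference estimator. Under (i) uniform convergence in
probability of the simulated auxiliary estimator `π̄_n(·,θ)` to the binding function `π(θ)`
over the compact identification set `Θ`, (ii) convergence in probability of the observed
auxiliary estimator `π̂_n` to `π(θ₀)`, and (iii) approximate matching
`‖π̂_n − π̄_n(·, θ̂_n)‖ → 0` in probability, any such sequence `θ̂_n` with values in `Θ`
is consistent for `θ₀`: `‖θ̂_n − θ₀‖ → 0` in probability. -/
theorem indirect_inference_consistency (m k : ℕ)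
    {Ω : Type*} [MeasurableSpace Ω] (P : Measure Ω) [IsProbabilityMeasure P]
    (Θ : Set (EuclideanSpace ℝ (Fin m))) (hΘcompact : IsCompact Θ)
    (θ₀ : EuclideanSpace ℝ (Fin m)) (hθ₀ : θ₀ ∈ Θ)
    (π : EuclideanSpace ℝ (Fin m) → EuclideanSpace ℝ (Fin k))
    (hπcont : ContinuousOn π Θ)
    (hsep : ∀ ε > (0 : ℝ), ∃ δ > (0 : ℝ), ∀ θ ∈ Θ, ε ≤ ‖θ - θ₀‖ → δ ≤ ‖π θ - π θ₀‖)
    (πhat : ℕ → Ω → EuclideanSpace ℝ (Fin k))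
    (πbar : ℕ → Ω → EuclideanSpace ℝ (Fin m) → EuclideanSpace ℝ (Fin k))
    (θhat : ℕ → Ω → EuclideanSpace ℝ (Fin m))
    (hθhatΘ : ∀ n ω, θhat n ω ∈ Θ)
    (h1 : ∀ t > (0 : ℝ), Tendsto
      (fun n => P {ω | ∃ θ ∈ Θ, t < ‖πbar n ω θ - π θ‖}) atTop (nhds 0))
    (h2 : ∀ t > (0 : ℝ), Tendsto
      (fun n => P {ω | t < ‖πhat n ω - π θ₀‖}) atTop (nhds 0))
    (h3 : ∀ t > (0 : ℝ), Tendsto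
      (fun n => P {ω | t < ‖πhat n ω - πbar n ω (θhat n ω)‖}) atTop (nhds 0)) :
    ∀ t > (0 : ℝ), Tendsto
      (fun n => P {ω | t < ‖θhat n ω - θ₀‖}) atTop (nhds 0) := by
  intro t ht
  obtain ⟨δ, hδ, hδsep⟩ := hsep t ht
  have hδ4 : (0:ℝ) < δ/4 := by linarith
  have hsub : ∀ n, {ω | t < ‖θhat n ω - θ₀‖} ⊆
      {ω | ∃ θ ∈ Θ, δ/4 < ‖πbar n ω θ - π θ‖} ∪
      {ω | δ/4 < ‖πhat n ω - π θ₀‖} ∪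
      {ω | δ/4 < ‖πhat n ω - πbar n ω (θhat n ω)‖} := by
    intro n ω hω
    simp only [Set.mem_setOf_eq] at hω
    by_contra hcon
    simp only [Set.mem_union, Set.mem_setOf_eq, not_or, not_exists, not_lt] at hcon
    obtain ⟨⟨hA, hB⟩, hC⟩ := hcon
    have hA' : ‖πbar n ω (θhat n ω) - π (θhat n ω)‖ ≤ δ/4 :=
      not_lt.1 fun h => hA _ ⟨hθhatΘ n ω, h⟩
    have hkey := hδsep (θhat n ω) (hθhatΘ n ω) (le_of_lt hω)
    have : ‖π (θhat n ω) - π θ₀‖ ≤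
        ‖π (θhat n ω) - πbar n ω (θhat n ω)‖ + ‖πbar n ω (θhat n ω) - πhat n ω‖
          + ‖πhat n ω - π θ₀‖ := by
      calc ‖π (θhat n ω) - π θ₀‖
          ≤ ‖π (θhat n ω) - πbar n ω (θhat n ω)‖ + ‖πbar n ω (θhat n ω) - π θ₀‖ :=
            norm_sub_le_norm_sub_add_norm_sub _ _ _
        _ ≤ ‖π (θhat n ω) - πbar n ω (θhat n ω)‖ +
            (‖πbar n ω (θhat n ω) - πhat n ω‖ + ‖πhat n ω - π θ₀‖) := by
            gcongr; exact norm_sub_le_norm_sub_add_norm_sub _ _ _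
        _ = _ := by ring
    rw [norm_sub_rev] at hA'
    rw [norm_sub_rev (πhat n ω)] at hC
    linarith
  have hbound : ∀ n, P {ω | t < ‖θhat n ω - θ₀‖} ≤
      P {ω | ∃ θ ∈ Θ, δ/4 < ‖πbar n ω θ - π θ‖} +
      P {ω | δ/4 < ‖πhat n ω - π θ₀‖} +
      P {ω | δ/4 < ‖πhat n ω - πbar n ω (θhat n ω)‖} := by
    intro n
    refine (measure_mono (hsub n)).trans ?_
    exact (measure_union_le _ _).trans (by gcongr; exact measure_union_le _ _)
  have hlim : Tendsto (fun n =>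
      P {ω | ∃ θ ∈ Θ, δ/4 < ‖πbar n ω θ - π θ‖} +
      P {ω | δ/4 < ‖πhat n ω - π θ₀‖} +
      P {ω | δ/4 < ‖πhat n ω - πbar n ω (θhat n ω)‖}) atTop (nhds 0) := by
    have := ((h1 _ hδ4).add (h2 _ hδ4)).add (h3 _ hδ4)
    simpa using this
  exact tendsto_of_tendsto_of_tendsto_of_le_of_le tendsto_const_nhds hlim
    (fun n => zero_le) hbound
end
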